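/- In the exact (non-independence-approximated) model where $I$ is zero-truncated Poisson($\lambda$) and $(N_1,\dots,N_k) | I = n$ is multinomial$(n; p_1,\dots,p_k)$, the exact expected privacy loss $\mathbb{E}[D] = \sum_{i=2}^k m_i \frac{e^\lambda - e^{\lambda(1-p_1)} - e^{\lambda(1-p_i)} + e^{\lambda(1-p_1-p_i)}}{e^\lambda - 1}$ satisfies, as $p_1 \to 0^+$ with $\lambda, p_i, m_i$ fixed, $\mathbb{E}[D] = \lambda p_1 \sum_{i=2}^k m_i \frac{e^\lambda - e^{\lambda(1-p_i)}}{e^\lambda - 1} + o(p_1)$. -/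

import Mathlib

open Real Finset Filter Topology Asymptotics

/-- Rigorous version of Proposition 2 (privacy-conscious asymptotics): the exact expected
privacy loss `E[D](p₁) = ∑_{i=2}^k m i (e^λ - e^{λ(1-p₁)} - e^{λ(1-p i)} + e^{λ(1-p₁-p i)})/(e^λ-1)`
satisfies `E[D](p₁) = λ p₁ ∑_{i=2}^k m i (e^λ - e^{λ(1-p i)})/(e^λ - 1) + o(p₁)` as `p₁ → 0⁺`. -/
theorem exact_privacy_loss_asymptotics (k : ℕ) (lam : ℝ) (hlam : 0 < lam)
    (p m : ℕ → ℝ) (hp : ∀ i, 0 < p i) (hp1 : ∀ i, p i ≤ 1) (hm : ∀ i, 0 ≤ m i) :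
    (fun p₁ : ℝ =>
        (∑ i ∈ Finset.Icc 2 k, m i *
          ((Real.exp lam - Real.exp (lam * (1 - p₁)) - Real.exp (lam * (1 - p i)) +
            Real.exp (lam * (1 - p₁ - p i))) / (Real.exp lam - 1))) -
        lam * p₁ * ∑ i ∈ Finset.Icc 2 k, m i *
          ((Real.exp lam - Real.exp (lam * (1 - p i))) / (Real.exp lam - 1)))
      =o[nhdsWithin 0 (Set.Ioi 0)] (fun p₁ : ℝ => p₁) := by
  have hE1 : Real.exp lam - 1 ≠ 0 := by
    have : (1 : ℝ) < Real.exp lam := by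
      calc (1:ℝ) = Real.exp 0 := (Real.exp_zero).symm
      _ < Real.exp lam := Real.exp_lt_exp.2 hlam
    linarith
  set C : ℝ := ∑ i ∈ Finset.Icc 2 k, m i *
      ((Real.exp lam - Real.exp (lam * (1 - p i))) / (Real.exp lam - 1)) with hC
  have key : ∀ x : ℝ,
      (∑ i ∈ Finset.Icc 2 k, m i *
        ((Real.exp lam - Real.exp (lam * (1 - x)) - Real.exp (lam * (1 - p i)) +
          Real.exp (lam * (1 - x - p i))) / (Real.exp lam - 1))) -
        lam * x * ∑ i ∈ Finset.Icc 2 k, m i *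
          ((Real.exp lam - Real.exp (lam * (1 - p i))) / (Real.exp lam - 1))
      = C * (1 - Real.exp (-(lam * x)) - lam * x) := by
    intro x
    rw [hC, Finset.sum_mul, Finset.mul_sum, ← Finset.sum_sub_distrib]
    refine Finset.sum_congr rfl fun i _ => ?_
    have e1 : Real.exp (lam * (1 - x)) = Real.exp lam * Real.exp (-(lam * x)) := by
      rw [← Real.exp_add]; ring_nf
    have e2 : Real.exp (lam * (1 - x - p i))
        = Real.exp (lam * (1 - p i)) * Real.exp (-(lam * x)) := by
      rw [← Real.exp_add]; ring_nf
    rw [e1, e2]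
    field_simp
    ring
  have hd : HasDerivAt (fun x : ℝ => 1 - Real.exp (-(lam * x))) lam 0 := by
    have h1 : HasDerivAt (fun x : ℝ => -(lam * x)) (-lam) 0 := by
      simpa using ((hasDerivAt_id (0 : ℝ)).const_mul lam).fun_neg
    have h2 := h1.exp
    simpa using (h2.const_sub 1)
  have h : (fun x : ℝ => 1 - Real.exp (-(lam * x)) - lam * x) =o[𝓝 0] fun x => x := by
    have := (hasDerivAt_iff_isLittleO.mp hd)
    simpa [smul_eq_mul, mul_comm] using this
  have goal_eq : (fun p₁ : ℝ =>
        (∑ i ∈ Finset.Icc 2 k, m i *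
          ((Real.exp lam - Real.exp (lam * (1 - p₁)) - Real.exp (lam * (1 - p i)) +
            Real.exp (lam * (1 - p₁ - p i))) / (Real.exp lam - 1))) -
        lam * p₁ * ∑ i ∈ Finset.Icc 2 k, m i *
          ((Real.exp lam - Real.exp (lam * (1 - p i))) / (Real.exp lam - 1)))
      = fun x : ℝ => C * (1 - Real.exp (-(lam * x)) - lam * x) := funext key
  rw [goal_eq]
  exact (h.const_mul_left C).mono nhdsWithin_le_nhds
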